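/- arXiv:0909.2277 — 12 statements merged into one kernel-verified Lean document; each statement's English description precedes it below -/
import Mathlib

section
/- For the logistic map L_r(x) = r·x·(1−x) on [0,1] with 1 < r ≤ 4, and any n ≥ 4, there is no point x ∈ [0,1] whose orbit segment (x, L_r(x), …, L_r^{n−1}(x)) consists of distinct values and realizes the pattern (n−2)·1·2·⋯·(n−3)·(n−1)·n; that is, there is no x with L_r(x) < L_r^2(x) < ⋯ < L_r^{n−3}(x) < x < L_r^{n−2}(x) < L_r^{n−1}(x). -/
/-- The logistic map `L_r(x) = r x (1-x)`. -/
def logistic (r : ℝ) : ℝ → ℝ := fun x => r * x * (1 - x)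

/-- For `1 < r ≤ 4` and `n ≥ 4`, no `x ∈ [0,1]` realizes the pattern
`(n-2)·1·2·⋯·(n-3)·(n-1)·n`, i.e. there is no `x` with
`L_r(x) < L_r²(x) < ⋯ < L_r^{n-3}(x) < x < L_r^{n-2}(x) < L_r^{n-1}(x)`. -/
theorem logistic_pattern_forbidden (r : ℝ) (hr1 : 1 < r) (hr4 : r ≤ 4)
    (n : ℕ) (hn : 4 ≤ n) :
    ¬ ∃ x ∈ Set.Icc (0 : ℝ) 1,
      (∀ i : ℕ, 1 ≤ i → i + 1 ≤ n - 3 →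
        (logistic r)^[i] x < (logistic r)^[i + 1] x) ∧
      (logistic r)^[n - 3] x < x ∧
      x < (logistic r)^[n - 2] x ∧
      (logistic r)^[n - 2] x < (logistic r)^[n - 1] x := by
  rintro ⟨x, hx, hchain, hlt, hxb, hbc⟩
  set f := logistic r with hf
  -- x > 0 : otherwise all iterates are 0
  have hx0 : 0 < x := by
    rcases lt_or_eq_of_le hx.1 with h | h
    · exact h
    · exfalso
      have hfix : f 0 = 0 := by simp [hf, logistic]
      have : f^[n-2] x = 0 := by
        rw [← h, Function.iterate_fixed hfix]
      rw [this, ← h] at hxb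
      exact lt_irrefl 0 hxb
  -- f x ≤ f^[n-3] x
  have key : ∀ k : ℕ, 1 ≤ k → k ≤ n - 3 → f^[1] x ≤ f^[k] x := by
    intro k
    induction k with
    | zero => intro h; omega
    | succ k ih =>
      intro _ hk
      rcases Nat.eq_zero_or_pos k with h | h
      · subst h; exact le_refl _
      · have hk1 : 1 ≤ k := h
        have := hchain k hk1 hk
        exact le_trans (ih hk1 (by omega)) (le_of_lt this)
  have hfx : f x < x := by
    have h1 : (1:ℕ) ≤ n - 3 := by omega
    calc f^[1] x ≤ f^[n-3] x := key (n-3) h1 le_rfl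
    _ < x := hlt
  -- b = f^[n-2] x
  set b := f^[n-2] x with hb
  have hfb : b < f b := by
    have : f^[n-1] x = f (f^[n-2] x) := by
      rw [show n - 1 = (n-2) + 1 by omega, Function.iterate_succ_apply']
    rw [this] at hbc
    exact hbc
  have hxb' : x < b := hxb
  have hb0 : 0 < b := lt_trans hx0 hxb'
  -- derive contradiction
  have e1 : r * x * (1 - x) < x := hfx
  have e2 : b < r * b * (1 - b) := hfb
  have hr0 : (0:ℝ) < r := lt_trans zero_lt_one hr1
  nlinarith [mul_lt_mul_of_pos_left e1 hb0, mul_lt_mul_of_pos_left e2 hx0,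
    mul_pos (mul_pos (mul_pos hr0 hx0) hb0) (sub_pos.mpr hxb')]
end

section
/- For the logistic map L_r with 1 < r ≤ 4 and any m ≥ 1, there exists x ∈ [0,1] with x < L_r(x) < L_r^2(x) < ⋯ < L_r^{m−1}(x); i.e., the increasing pattern 1 2 ⋯ m is an allowed pattern of L_r. -/
/-- For `1 < r ≤ 4` and any `m ≥ 1`, there exists `x ∈ [0,1]` with
`x < L_r(x) < L_r²(x) < ⋯ < L_r^{m-1}(x)`: the increasing pattern `1 2 ⋯ m`
is allowed for `L_r`. -/
theorem logistic_increasing_allowed (r : ℝ) (hr1 : 1 < r) (hr4 : r ≤ 4)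
    (m : ℕ) (hm : 1 ≤ m) :
    ∃ x ∈ Set.Icc (0 : ℝ) 1,
      ∀ i : ℕ, i + 1 ≤ m - 1 → (logistic r)^[i] x < (logistic r)^[i + 1] x := by
  set f := logistic r with hf
  have hr0 : (0:ℝ) < r := by linarith
  set p : ℝ := 1 - 1/r with hp
  have hinv : 0 < 1/r ∧ 1/r < 1 := by
    constructor
    · positivity
    · rw [div_lt_one hr0]; exact hr1
  have hp0 : 0 < p := by rw [hp]; linarith [hinv.2]
  have hp1 : p < 1 := by rw [hp]; linarith [hinv.1]
  have hpkey : r * (1 - p) = 1 := by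
    rw [hp]; field_simp; ring
  have hcont : Continuous f := by
    rw [hf]; unfold logistic; fun_prop
  have hfval : ∀ y : ℝ, f y = r * y * (1 - y) := fun y => rfl
  have hfix : ∀ i : ℕ, f^[i] (0:ℝ) = 0 := by
    intro i
    apply Function.iterate_fixed
    rw [hfval]; ring
  -- eventually near 0 from the right, all iterates up to m are below p
  have hev : ∀ᶠ x in nhdsWithin (0:ℝ) (Set.Ioi 0),
      ∀ i ∈ Finset.range m, f^[i] x < p := by
    rw [Filter.eventually_all_finset]
    intro i _
    apply Filter.Eventually.filter_mono nhdsWithin_le_nhds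
    have ht : Filter.Tendsto (f^[i]) (nhds 0) (nhds 0) := by
      have := (hcont.iterate i).tendsto 0
      rwa [hfix i] at this
    exact ht.eventually_lt_const hp0
  have hx : ∃ x : ℝ, 0 < x ∧ ∀ i ∈ Finset.range m, f^[i] x < p := by
    have := (hev.and (self_mem_nhdsWithin :
      Set.Ioi (0:ℝ) ∈ nhdsWithin (0:ℝ) (Set.Ioi 0))).exists
    obtain ⟨x, h1, h2⟩ := this
    exact ⟨x, h2, h1⟩
  obtain ⟨x, hx0, hxp⟩ := hx
  -- positivity of iterates
  have hpos : ∀ i, i < m → 0 < f^[i] x := by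
    intro i
    induction i with
    | zero => intro _; simpa using hx0
    | succ n ih =>
      intro hn
      have hn' : n < m := Nat.lt_of_succ_lt hn
      have h0 : 0 < f^[n] x := ih hn'
      have h1 : f^[n] x < p := hxp n (Finset.mem_range.mpr hn')
      rw [Function.iterate_succ_apply', hfval]
      have h2 : f^[n] x < 1 := lt_trans h1 hp1
      exact mul_pos (mul_pos hr0 h0) (by linarith)
  have hxm : x < p := by
    have := hxp 0 (Finset.mem_range.mpr (by omega))
    simpa using this
  refine ⟨x, ⟨le_of_lt hx0, ?_⟩, ?_⟩
  · linarith
  · intro i hi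
    have him : i + 1 < m := by omega
    have hi' : i < m := by omega
    have h0 : 0 < f^[i] x := hpos i hi'
    have h1 : f^[i] x < p := hxp i (Finset.mem_range.mpr hi')
    rw [Function.iterate_succ_apply', hfval]
    set y := f^[i] x
    have hry : 1 < r * (1 - y) := by
      have := mul_lt_mul_of_pos_left (by linarith : 1 - p < 1 - y) hr0
      linarith [hpkey]
    nlinarith
end

section
/- For the logistic map L_r with 1 < r ≤ 4 and any m ≥ 2, there exists y ∈ [0,1] realizing the pattern m·1·2·⋯·(m−1); i.e., L_r(y) < L_r^2(y) < ⋯ < L_r^{m−1}(y) < y. -/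
/-- For `1 < r ≤ 4` and any `m ≥ 2`, there exists `y ∈ [0,1]` realizing the pattern
`m·1·2·⋯·(m-1)`, i.e. `L_r(y) < L_r²(y) < ⋯ < L_r^{m-1}(y) < y`. -/
theorem logistic_pattern_m1_allowed (r : ℝ) (hr1 : 1 < r) (hr4 : r ≤ 4)
    (m : ℕ) (hm : 2 ≤ m) :
    ∃ y ∈ Set.Icc (0 : ℝ) 1,
      (∀ i : ℕ, 1 ≤ i → i + 1 ≤ m - 1 →
        (logistic r)^[i] y < (logistic r)^[i + 1] y) ∧
      (logistic r)^[m - 1] y < y := by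
  have hr0 : (0:ℝ) < r := lt_trans one_pos hr1
  set f : ℝ → ℝ := logistic r with hf
  set p : ℝ := 1 - 1/r with hp
  have hp0 : 0 < p := by
    have : 1/r < 1 := by rw [div_lt_one hr0]; exact hr1
    simp only [hp]; linarith
  set c : ℝ := min p (1/2) with hc
  have hc0 : 0 < c := lt_min hp0 (by norm_num)
  have hc2 : c ≤ 1/2 := min_le_right _ _
  have hcp : c ≤ p := min_le_left _ _
  have hrm : (0:ℝ) < r ^ m := pow_pos hr0 m
  have hrm1 : (1:ℝ) < r ^ m := one_lt_pow₀ hr1 (by omega)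
  set ε : ℝ := c / r ^ m with he
  have hε0 : 0 < ε := div_pos hc0 hrm
  -- key single-step facts
  have step : ∀ x : ℝ, 0 < x → x < c → 0 < f x ∧ f x ≤ r * x ∧ x < f x := by
    intro x hx hxc
    have hx1 : x < 1 := by
      have := lt_of_lt_of_le hxc hc2; linarith
    have hfx : f x = r * x * (1 - x) := rfl
    refine ⟨?_, ?_, ?_⟩
    · rw [hfx]; exact mul_pos (mul_pos hr0 hx) (by linarith)
    · rw [hfx]; nlinarith [mul_nonneg (mul_nonneg hr0.le hx.le) hx.le]
    · have hxp : x < p := lt_of_lt_of_le hxc hcp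
      have h1 : 1/r < 1 - x := by simp only [hp] at hxp; linarith
      have h2 : 1 < r * (1 - x) := by
        have := (div_lt_iff₀ hr0).mp h1; nlinarith
      rw [hfx]; nlinarith
  -- iterates of ε stay in (0, c) and are bounded by r^k * ε
  have key : ∀ k, k ≤ m - 2 → 0 < f^[k] ε ∧ f^[k] ε < c ∧ f^[k] ε ≤ r ^ k * ε := by
    intro k
    induction k with
    | zero =>
      intro _
      refine ⟨hε0, ?_, by simp⟩
      simp only [Function.iterate_zero, id_eq, he]
      exact div_lt_self hc0 hrm1
    | succ k ih =>
      intro hk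
      obtain ⟨h1, h2, h3⟩ := ih (by omega)
      obtain ⟨s1, s2, s3⟩ := step _ h1 h2
      rw [Function.iterate_succ_apply']
      have hb : f (f^[k] ε) ≤ r ^ (k+1) * ε := by
        calc f (f^[k] ε) ≤ r * f^[k] ε := s2
        _ ≤ r * (r ^ k * ε) := by nlinarith
        _ = r ^ (k+1) * ε := by ring
      refine ⟨s1, ?_, hb⟩
      have hlt : r ^ (k+1) < r ^ m := pow_lt_pow_right₀ hr1 (by omega)
      calc f (f^[k] ε) ≤ r ^ (k+1) * ε := hb
      _ < r ^ m * ε := by nlinarith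
      _ = c := by rw [he]; field_simp
  -- 4ε ≤ 1
  have h4c : 4 * c ≤ r ^ m := by
    have hpr : p * r = r - 1 := by rw [hp]; field_simp
    have h1 : 4 * p ≤ r := by nlinarith [sq_nonneg (r - 2)]
    have h2 : r ≤ r ^ m :=
      calc r = r ^ 1 := (pow_one r).symm
      _ ≤ r ^ m := pow_le_pow_right₀ hr1.le (by omega)
    linarith [mul_le_mul_of_nonneg_left hcp (by norm_num : (0:ℝ) ≤ 4)]
  have hε1 : 4 * ε ≤ 1 := by
    rw [he]
    rw [← mul_div_assoc, div_le_one hrm]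
    linarith
  -- construct y
  set s : ℝ := Real.sqrt (1 - 4 * ε / r) with hs
  have harg0 : 0 < 1 - 4 * ε / r := by
    have : 4 * ε / r < 1 := by rw [div_lt_one hr0]; linarith
    linarith
  have hs0 : 0 < s := Real.sqrt_pos.mpr harg0
  have hs1 : s ≤ 1 := by
    rw [hs]
    have h1 : 1 - 4 * ε / r ≤ 1 := by
      have : 0 < 4 * ε / r := by positivity
      linarith
    calc Real.sqrt (1 - 4 * ε / r) ≤ Real.sqrt 1 := Real.sqrt_le_sqrt h1
    _ = 1 := Real.sqrt_one
  have hssq : s ^ 2 = 1 - 4 * ε / r := Real.sq_sqrt (le_of_lt harg0)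
  set y : ℝ := (1 + s) / 2 with hy
  have hy12 : 1/2 < y := by rw [hy]; linarith
  have hy1 : y ≤ 1 := by rw [hy]; linarith
  have hfy : f y = ε := by
    show r * y * (1 - y) = ε
    have : y * (1 - y) = ε / r := by
      rw [hy]
      have : ((1 + s)/2) * (1 - (1 + s)/2) = (1 - s^2)/4 := by ring
      rw [this, hssq]
      field_simp
      ring
    rw [mul_assoc, this]
    field_simp
  refine ⟨y, ⟨by linarith, hy1⟩, ?_, ?_⟩
  · intro i hi1 hi2
    obtain ⟨j, rfl⟩ : ∃ j, i = j + 1 := ⟨i - 1, by omega⟩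
    show f^[j+1] y < f^[j+1+1] y
    have e1 : f^[j+1] y = f^[j] ε := by rw [Function.iterate_succ_apply, hfy]
    have e2 : f^[j+1+1] y = f^[j+1] ε := by
      rw [Function.iterate_succ_apply]
      rw [hfy]
    rw [e1, e2, Function.iterate_succ_apply']
    obtain ⟨h1, h2, _⟩ := key j (by omega)
    exact (step _ h1 h2).2.2
  · show f^[m-1] y < y
    have hm1 : m - 1 = (m - 2) + 1 := by omega
    rw [hm1, Function.iterate_succ_apply, hfy]
    obtain ⟨_, h2, _⟩ := key (m - 2) le_rfl
    linarith
end

section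
/- For the logistic map L_r with 1 < r ≤ 2 and n ≥ 3, there is no x ∈ [0,1] with L_r(x) < L_r^2(x) < ⋯ < L_r^{n−2}(x) < x < L_r^{n−1}(x); that is, the pattern (n−1)·1·2·⋯·(n−2)·n is a forbidden pattern of L_r. -/
/-- For `1 < r ≤ 2` and `n ≥ 3`, there is no `x ∈ [0,1]` with
`L_r(x) < L_r²(x) < ⋯ < L_r^{n-2}(x) < x < L_r^{n-1}(x)`:
the pattern `(n-1)·1·2·⋯·(n-2)·n` is forbidden for `L_r`. -/
theorem logistic_small_r_forbidden (r : ℝ) (hr1 : 1 < r) (hr2 : r ≤ 2)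
    (n : ℕ) (hn : 3 ≤ n) :
    ¬ ∃ x ∈ Set.Icc (0 : ℝ) 1,
      (∀ i : ℕ, 1 ≤ i → i + 1 ≤ n - 2 →
        (logistic r)^[i] x < (logistic r)^[i + 1] x) ∧
      (logistic r)^[n - 2] x < x ∧
      x < (logistic r)^[n - 1] x := by
  rintro ⟨x, ⟨hx0, hx1⟩, hchain, hlt, hgt⟩
  have hmap : ∀ z ∈ Set.Icc (0:ℝ) 1, logistic r z ∈ Set.Icc (0:ℝ) 1 := by
    rintro z ⟨hz0, hz1⟩
    constructor
    · exact mul_nonneg (mul_nonneg (by linarith) hz0) (by linarith)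
    · simp only [logistic]
      nlinarith [sq_nonneg (1 - 2*z)]
  have hicc : ∀ k, (logistic r)^[k] x ∈ Set.Icc (0:ℝ) 1 := by
    intro k
    induction k with
    | zero => exact ⟨hx0, hx1⟩
    | succ k ih => rw [Function.iterate_succ_apply']; exact hmap _ ih
  -- `L x ≤ L^[k] x` for `1 ≤ k ≤ n-2`
  have hstep : ∀ k, 1 ≤ k → k ≤ n - 2 → (logistic r)^[1] x ≤ (logistic r)^[k] x := by
    intro k
    induction k with
    | zero => intro h; omega
    | succ k ih =>
      intro _ hk
      rcases Nat.eq_zero_or_pos k with hk0 | hk1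
      · subst hk0; exact le_rfl
      · exact le_of_lt (lt_of_le_of_lt (ih hk1 (by omega)) (hchain k hk1 hk))
  have hfxle : (logistic r)^[1] x ≤ (logistic r)^[n-2] x := hstep (n-2) (by omega) le_rfl
  rw [Function.iterate_one] at hfxle
  have hfxlt : logistic r x < x := lt_of_le_of_lt hfxle hlt
  have hfx0 : 0 ≤ logistic r x := (hmap x ⟨hx0, hx1⟩).1
  have hxpos : 0 < x := lt_of_le_of_lt hfx0 hfxlt
  set y := (logistic r)^[n - 2] x with hy
  have hyIcc := hicc (n - 2)
  rw [← hy] at hyIcc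
  obtain ⟨hy0, hy1⟩ := hyIcc
  have hn1 : n - 1 = (n - 2) + 1 := by omega
  rw [hn1, Function.iterate_succ_apply', ← hy] at hgt
  -- now hgt : x < logistic r y, hlt : y < x
  simp only [logistic] at hgt hfxlt
  -- x above fixed point : r * x > r - 1
  have hxp : r - 1 < r * x := by nlinarith
  -- y > 0
  have hypos : 0 < y := by
    rcases eq_or_lt_of_le hy0 with h | h
    · exfalso; rw [← h] at hgt; simp at hgt; linarith
    · exact h
  -- y below fixed point : r * y < r - 1
  have hyp : r * y < r - 1 := by nlinarith
  -- final contradiction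
  nlinarith [mul_pos (show (0:ℝ) < r - 1 - r*y by linarith)
      (show (0:ℝ) < 1 - r*y by nlinarith)]
end

section
/- For each 1 < r < 4 there exists n₀ such that for all n ≥ n₀, there is no x ∈ [0,1] with L_r(x) < L_r^2(x) < ⋯ < L_r^{n−2}(x) < x < L_r^{n−1}(x); i.e., the pattern (n−1)·1·2·⋯·(n−2)·n is forbidden for L_r for all sufficiently large n. -/
set_option maxHeartbeats 1000000

private lemma logistic_mem (r : ℝ) (hr1 : 1 < r) (hr4 : r < 4) {x : ℝ}
    (hx : x ∈ Set.Icc (0:ℝ) 1) : logistic r x ∈ Set.Icc (0:ℝ) 1 := by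
  obtain ⟨h0, h1⟩ := hx
  have h2 : (0:ℝ) ≤ 1 - x := by linarith
  constructor
  · have := mul_nonneg (mul_nonneg (by linarith : (0:ℝ) ≤ r) h0) h2
    simpa [logistic] using this
  · show r * x * (1 - x) ≤ 1
    nlinarith [sq_nonneg (2*x - 1), mul_nonneg h0 h2]

private lemma logistic_iter_mem (r : ℝ) (hr1 : 1 < r) (hr4 : r < 4) {x : ℝ}
    (hx : x ∈ Set.Icc (0:ℝ) 1) (i : ℕ) : (logistic r)^[i] x ∈ Set.Icc (0:ℝ) 1 := by
  induction i with
  | zero => simpa using hx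
  | succ k ih =>
    rw [Function.iterate_succ_apply']
    exact logistic_mem r hr1 hr4 ih

/-- If `y < L y` with `y ∈ [0,1]`, then `0 < y < (r-1)/r`. -/
private lemma lt_image (r : ℝ) (hr1 : 1 < r) {y : ℝ} (hy0 : 0 ≤ y) (hy1 : y ≤ 1)
    (h : y < logistic r y) : 0 < y ∧ y < (r - 1)/r := by
  have hr0 : (0:ℝ) < r := by linarith
  have h' : y < r * y * (1 - y) := h
  constructor
  · rcases lt_or_eq_of_le hy0 with h0 | h0
    · exact h0
    · exfalso; rw [← h0] at h'; simp at h'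
  · rw [lt_div_iff₀ hr0]
    nlinarith

/-- If `L x < x` with `x ∈ (0,1]`, then `x > (r-1)/r`. -/
private lemma image_lt (r : ℝ) (hr1 : 1 < r) {x : ℝ} (hx0 : 0 < x)
    (h : logistic r x < x) : (r - 1)/r < x := by
  have hr0 : (0:ℝ) < r := by linarith
  have h' : r * x * (1 - x) < x := h
  rw [div_lt_iff₀ hr0]
  nlinarith

/-- For `r > 2`: if `y < (r-1)/r` and `L y < (r-1)/r`, with `0 ≤ y`, then `y < 1/r`. -/
private lemma below_inv (r : ℝ) (hr2 : 2 < r) {y : ℝ} (hy0 : 0 ≤ y)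
    (hy : y < (r - 1)/r) (hLy : logistic r y < (r - 1)/r) : y < 1/r := by
  have hr0 : (0:ℝ) < r := by linarith
  have h' : r * y * (1 - y) < (r - 1)/r := hLy
  by_contra hcon
  push_neg at hcon
  have h1 : 1 ≤ y * r := by rw [div_le_iff₀ hr0] at hcon; linarith
  have h2 : y * r < r - 1 := (lt_div_iff₀ hr0).mp hy
  have h3 : r * y * (1 - y) * r < r - 1 := (lt_div_iff₀ hr0).mp h'
  -- L y - p = -r (y - 1/r)(y - p) ≥ 0, contradiction
  nlinarith [mul_nonneg (by nlinarith : (0:ℝ) ≤ y * r - 1) (by nlinarith : (0:ℝ) ≤ (r-1) - y * r)]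

/-- For `0 ≤ y ≤ 1/r`: `(r-1) * y ≤ L y`. -/
private lemma growth (r : ℝ) (hr1 : 1 < r) {y : ℝ} (hy0 : 0 ≤ y) (hy : y ≤ 1/r) :
    (r - 1) * y ≤ logistic r y := by
  have hr0 : (0:ℝ) < r := by linarith
  show (r - 1) * y ≤ r * y * (1 - y)
  have h1 : y * r ≤ 1 := (le_div_iff₀ hr0).mp hy
  nlinarith

/-- For each `1 < r < 4` there exists `n₀` such that for every `n ≥ n₀`, the pattern
`(n-1)·1·2·⋯·(n-2)·n` is forbidden for `L_r`: no `x ∈ [0,1]` satisfies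
`L_r(x) < L_r²(x) < ⋯ < L_r^{n-2}(x) < x < L_r^{n-1}(x)`. -/
theorem logistic_eventually_forbidden (r : ℝ) (hr1 : 1 < r) (hr4 : r < 4) :
    ∃ n₀ : ℕ, ∀ n : ℕ, n₀ ≤ n →
      ¬ ∃ x ∈ Set.Icc (0 : ℝ) 1,
        (∀ i : ℕ, 1 ≤ i → i + 1 ≤ n - 2 →
          (logistic r)^[i] x < (logistic r)^[i + 1] x) ∧
        (logistic r)^[n - 2] x < x ∧
        x < (logistic r)^[n - 1] x := by
  have hr0 : (0:ℝ) < r := by linarith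
  set p : ℝ := (r - 1)/r with hp_def
  set L : ℝ → ℝ := logistic r with hL_def
  -- common analysis, parametrized by n = m + 7
  -- choose n₀ depending on whether r ≤ 2
  by_cases hr2 : r ≤ 2
  · -- easy case: n₀ = 7
    refine ⟨7, ?_⟩
    intro n hn ⟨x, hx, hch, hy_lt_x, hx_lt⟩
    obtain ⟨m, rfl⟩ : ∃ m, n = m + 7 := ⟨n - 7, by omega⟩
    have h2 : m + 7 - 2 = m + 5 := by omega
    have h1 : m + 7 - 1 = m + 6 := by omega
    rw [h2] at hy_lt_x hch
    rw [h1] at hx_lt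
    set y : ℝ := L^[m+5] x with hy_def
    have hyx : y < x := hy_lt_x
    have hxy : x < L y := by
      have : L^[m+6] x = L (L^[m+5] x) := Function.iterate_succ_apply' L (m+5) x
      rw [this] at hx_lt; exact hx_lt
    have hy_mem := logistic_iter_mem r hr1 hr4 hx (m+5)
    have hyLy : y < L y := lt_trans hyx hxy
    have hy_facts := lt_image r hr1 hy_mem.1 hy_mem.2 hyLy
    -- L y < p since y < p ≤ 1/r (r ≤ 2)
    have hLy_lt_p : L y < p := by
      have hy0 : 0 ≤ y := hy_mem.1
      have hyp : y < p := hy_facts.2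
      show r * y * (1 - y) < p
      rw [hp_def] at hyp ⊢
      have h1 : y * r < r - 1 := (lt_div_iff₀ hr0).mp hyp
      rw [lt_div_iff₀ hr0]
      nlinarith
    have hx_lt_p : x < p := lt_trans hxy hLy_lt_p
    have hx0 : 0 < x := lt_trans hy_facts.1 hyx
    -- then x < L x, but chain gives L x ≤ y < x
    have hxLx : x < L x := by
      show x < r * x * (1 - x)
      rw [hp_def] at hx_lt_p
      have h1 : x * r < r - 1 := (lt_div_iff₀ hr0).mp hx_lt_p
      nlinarith
    have hmono : ∀ j, 1 ≤ j → j ≤ m + 5 → L^[1] x ≤ L^[j] x := by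
      intro j
      induction j with
      | zero => omega
      | succ k ih =>
        intro _ hk
        rcases Nat.lt_or_ge 1 (k+1) with h | h
        · have hk1 : 1 ≤ k := by omega
          exact le_trans (ih hk1 (by omega)) (hch k hk1 (by omega)).le
        · have : k + 1 = 1 := by omega
          rw [this]
    have hLx_le : L x ≤ y := by
      have := hmono (m+5) (by omega) le_rfl
      simpa [hy_def] using this
    linarith
  · -- hard case: r > 2
    push_neg at hr2
    set c : ℝ := r * (r/4) * (1 - r/4) with hc_def
    have hc0 : 0 < c := by
      apply mul_pos (mul_pos hr0 (by linarith)); linarith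
    obtain ⟨k, hk⟩ := pow_unbounded_of_one_lt (1/(r*c)) (by linarith : (1:ℝ) < r - 1)
    refine ⟨k + 7, ?_⟩
    intro n hn ⟨x, hx, hch, hy_lt_x, hx_lt⟩
    obtain ⟨m, rfl⟩ : ∃ m, n = m + 7 := ⟨n - 7, by omega⟩
    have hmk : k ≤ m + 2 := by omega
    have h2 : m + 7 - 2 = m + 5 := by omega
    have h1 : m + 7 - 1 = m + 6 := by omega
    rw [h2] at hy_lt_x hch
    rw [h1] at hx_lt
    set y : ℝ := L^[m+5] x with hy_def
    have hyx : y < x := hy_lt_x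
    have hxy : x < L y := by
      have : L^[m+6] x = L (L^[m+5] x) := Function.iterate_succ_apply' L (m+5) x
      rw [this] at hx_lt; exact hx_lt
    have hy_mem := logistic_iter_mem r hr1 hr4 hx (m+5)
    have hyLy : y < L y := lt_trans hyx hxy
    have hy_facts := lt_image r hr1 hy_mem.1 hy_mem.2 hyLy
    -- iterates z i mem
    have hz_mem : ∀ i, L^[i] x ∈ Set.Icc (0:ℝ) 1 := logistic_iter_mem r hr1 hr4 hx
    -- chain elements below p
    have hbelow_p : ∀ i, 1 ≤ i → i ≤ m + 4 → L^[i] x < p := by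
      intro i hi1 hi2
      have hstep := hch i hi1 (by omega)
      have hiter : L^[i+1] x = L (L^[i] x) := Function.iterate_succ_apply' L i x
      rw [hiter] at hstep
      exact (lt_image r hr1 (hz_mem i).1 (hz_mem i).2 hstep).2
    -- chain elements below 1/r
    have hbelow_inv : ∀ i, 1 ≤ i → i ≤ m + 3 → L^[i] x < 1/r := by
      intro i hi1 hi2
      have h1' := hbelow_p i hi1 (by omega)
      have h2' := hbelow_p (i+1) (by omega) (by omega)
      have hiter : L^[i+1] x = L (L^[i] x) := Function.iterate_succ_apply' L i x
      rw [hiter] at h2'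
      exact below_inv r hr2 (hz_mem i).1 h1' h2'
    -- z 1 > 0
    have hz1_pos : 0 < L^[1] x := by
      have hstep := hch 1 le_rfl (by omega)
      have hiter : L^[1+1] x = L (L^[1] x) := Function.iterate_succ_apply' L 1 x
      rw [hiter] at hstep
      exact (lt_image r hr1 (hz_mem 1).1 (hz_mem 1).2 hstep).1
    -- geometric growth
    have hgeo : ∀ i, 1 ≤ i → i ≤ m + 3 → (r-1)^(i-1) * L^[1] x ≤ L^[i] x := by
      intro i
      induction i with
      | zero => omega
      | succ j ih =>
        intro _ hj
        rcases Nat.lt_or_ge 1 (j+1) with h | h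
        · have hj1 : 1 ≤ j := by omega
          have hprev := ih hj1 (by omega)
          have hjinv := hbelow_inv j hj1 (by omega)
          have hgrow := growth r hr1 (hz_mem j).1 hjinv.le
          have hiter : L^[j+1] x = L (L^[j] x) := Function.iterate_succ_apply' L j x
          rw [hiter]
          have hr1' : (0:ℝ) ≤ r - 1 := by linarith
          calc (r-1)^(j+1-1) * L^[1] x = (r-1) * ((r-1)^(j-1) * L^[1] x) := by
                have : j + 1 - 1 = (j - 1) + 1 := by omega
                rw [this, pow_succ]; ring
            _ ≤ (r-1) * L^[j] x := by
                apply mul_le_mul_of_nonneg_left hprev hr1'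
            _ ≤ L (L^[j] x) := hgrow
        · have hj0 : j + 1 = 1 := by omega
          rw [hj0]; simp
    -- upper bound: (r-1)^(m+2) * z1 ≤ z (m+3) < 1/r
    have hub : (r-1)^(m+2) * L^[1] x < 1/r := by
      have h1' := hgeo (m+3) (by omega) le_rfl
      have h2' := hbelow_inv (m+3) (by omega) le_rfl
      have : m + 3 - 1 = m + 2 := by omega
      rw [this] at h1'
      linarith
    -- lower bound: z1 = L x ≥ c
    have hlb : c ≤ L^[1] x := by
      -- x > p and x ≤ r/4
      have hmono : ∀ j, 1 ≤ j → j ≤ m + 5 → L^[1] x ≤ L^[j] x := by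
        intro j
        induction j with
        | zero => omega
        | succ kk ih =>
          intro _ hk
          rcases Nat.lt_or_ge 1 (kk+1) with h | h
          · have hk1 : 1 ≤ kk := by omega
            exact le_trans (ih hk1 (by omega)) (hch kk hk1 (by omega)).le
          · have : kk + 1 = 1 := by omega
            rw [this]
      have hLx_le_y : L^[1] x ≤ y := by
        have := hmono (m+5) (by omega) le_rfl
        simpa [hy_def] using this
      have hLx_lt_x : L x < x := by
        have : L^[1] x = L x := Function.iterate_one L ▸ rfl
        rw [this] at hLx_le_y
        exact lt_of_le_of_lt hLx_le_y hyx
      have hx0 : 0 < x := lt_trans hy_facts.1 hyx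
      have hp_lt_x : p < x := image_lt r hr1 hx0 hLx_lt_x
      have hx_le : x ≤ r/4 := by
        have hLy_le : L y ≤ r/4 := by
          show r * y * (1 - y) ≤ r/4
          nlinarith [sq_nonneg (2*y - 1)]
        linarith
      -- p > 1/2 since r > 2
      have hp_half : (1:ℝ)/2 < p := by
        rw [hp_def, lt_div_iff₀ hr0]; nlinarith
      have hLx_eq : L^[1] x = r * x * (1 - x) := by
        simp [hL_def, logistic]
      rw [hLx_eq, hc_def]
      -- x ∈ (1/2, r/4], so x(1-x) ≥ (r/4)(1-r/4)
      nlinarith [mul_nonneg (by linarith : (0:ℝ) ≤ r/4 - x) (by linarith : (0:ℝ) ≤ x + r/4 - 1)]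
    -- contradiction
    clear hch hgeo hbelow_p hbelow_inv hz_mem hy_facts hx_lt hy_lt_x
    have hpow : (r-1)^k ≤ (r-1)^(m+2) :=
      pow_le_pow_right₀ (by linarith : (1:ℝ) ≤ r - 1) hmk
    have hk' : 1/(r*c) < (r-1)^(m+2) := lt_of_lt_of_le hk hpow
    have hrc : 0 < r * c := mul_pos hr0 hc0
    rw [div_lt_iff₀ hrc] at hk'
    have hpow_pos : (0:ℝ) < (r-1)^(m+2) := pow_pos (by linarith) _
    have h4 : (r-1)^(m+2) * L^[1] x * r < 1 := (lt_div_iff₀ hr0).mp hub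
    nlinarith [mul_le_mul_of_nonneg_right (mul_le_mul_of_nonneg_left hlb hpow_pos.le) hr0.le]
end

section
/- Let Λ : [0,1] → [0,1] be the tent map (Λ(x) = 2x for x ≤ 1/2, Λ(x) = 2 − 2x for x ≥ 1/2). For every m ≥ 3, the point x = 1 − (1 + 2^{−m})/(2^{m−1} + 1) satisfies Λ(x) < Λ^2(x) < ⋯ < Λ^{m−2}(x) < x < Λ^{m−1}(x); hence the pattern (m−1)·1·2·⋯·(m−2)·m is an allowed pattern of the tent map. -/
/-- The tent map `Λ(x) = 2x` for `x < 1/2`, `Λ(x) = 2 - 2x` for `x ≥ 1/2`. -/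
noncomputable def tent : ℝ → ℝ := fun x => if x < 1 / 2 then 2 * x else 2 - 2 * x

set_option maxHeartbeats 1000000 in
/-- For `m ≥ 3`, the point `x = 1 - (1 + 2^{-m})/(2^{m-1} + 1)` satisfies
`Λ(x) < Λ²(x) < ⋯ < Λ^{m-2}(x) < x < Λ^{m-1}(x)`, so the pattern
`(m-1)·1·2·⋯·(m-2)·m` is allowed for the tent map. -/
theorem tent_pattern_allowed (m : ℕ) (hm : 3 ≤ m) :
    let x : ℝ := 1 - (1 + ((2 : ℝ) ^ m)⁻¹) / ((2 : ℝ) ^ (m - 1) + 1)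
    (∀ i : ℕ, 1 ≤ i → i + 1 ≤ m - 2 → tent^[i] x < tent^[i + 1] x) ∧
    tent^[m - 2] x < x ∧
    x < tent^[m - 1] x := by
  obtain ⟨n, rfl⟩ : ∃ n, m = n + 3 := ⟨m - 3, by omega⟩
  intro x
  have hm1 : n + 3 - 1 = n + 2 := by omega
  have hm2 : n + 3 - 2 = n + 1 := by omega
  rw [hm1, hm2]
  set a : ℝ := (2 : ℝ) ^ n with ha
  have ha1 : (1 : ℝ) ≤ a := one_le_pow₀ (by norm_num)
  have ha0 : (0 : ℝ) < a := by linarith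
  have ha' : a ≠ 0 := ne_of_gt ha0
  have hd1 : (0 : ℝ) < a * 4 + 1 := by nlinarith
  have hd1' : a * 4 + 1 ≠ 0 := ne_of_gt hd1
  have hpow : ∀ k : ℕ, (2 : ℝ) ^ (n + k) = a * 2 ^ k := by
    intro k; rw [pow_add]
  have hx : x = 1 - (1 + (a * 8)⁻¹) / (a * 4 + 1) := by
    simp only [x, hm1, hpow]; norm_num
  set c : ℝ := (a * 8 + 1) / (a * 4 * (a * 4 + 1)) with hc
  have hc0 : 0 < c := by
    apply div_pos <;> nlinarith
  clear_value x a c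
  -- x ≥ 1/2
  have hxge : ¬ x < 1 / 2 := by
    push_neg
    have key : x - 1 / 2 = (16 * a ^ 2 - 4 * a - 1) / (8 * a * (a * 4 + 1)) := by
      rw [hx]; field_simp; ring
    nlinarith [div_pos (show (0:ℝ) < 16 * a ^ 2 - 4 * a - 1 by nlinarith)
      (show (0:ℝ) < 8 * a * (a * 4 + 1) by nlinarith), key]
  have h1 : tent x = c := by
    rw [tent]
    simp only [if_neg hxge]
    rw [hx, hc]
    field_simp
    ring
  have hac : a * c < 1 / 2 := by
    have key : 1 / 2 - a * c = 1 / (4 * (a * 4 + 1)) := by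
      rw [hc]; field_simp; ring
    nlinarith [div_pos (show (0:ℝ) < 1 by norm_num)
      (show (0:ℝ) < 4 * (a * 4 + 1) by nlinarith), key]
  -- iterates
  have hiter : ∀ i : ℕ, i ≤ n + 1 → tent^[i + 1] x = 2 ^ i * c := by
    intro i hi
    induction i with
    | zero => simpa using h1
    | succ j ih =>
      have hj : j ≤ n + 1 := by omega
      have hjn : j ≤ n := by omega
      rw [Function.iterate_succ_apply', ih hj]
      have hlt : (2 : ℝ) ^ j * c < 1 / 2 := by
        have h2j : (2 : ℝ) ^ j ≤ a := by
          rw [ha]; exact pow_le_pow_right₀ (by norm_num) hjn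
        have := mul_le_mul_of_nonneg_right h2j hc0.le
        linarith
      rw [tent]; simp only [if_pos hlt]; ring
  have h2na : (2 : ℝ) ^ n = a := ha.symm
  refine ⟨?_, ?_, ?_⟩
  · intro i hi1 hi2
    obtain ⟨j, rfl⟩ : ∃ j, i = j + 1 := ⟨i - 1, by omega⟩
    rw [hiter j (by omega), hiter (j + 1) (by omega)]
    have : (2 : ℝ) ^ j < 2 ^ (j + 1) := by
      apply pow_lt_pow_right₀ (by norm_num) (by omega)
    nlinarith
  · have e : tent^[n + 1] x = a * c := by
      rw [hiter n (by omega), h2na]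
    rw [e]
    have key : x - a * c = (16 * a ^ 2 - 2 * a - 1) / (8 * a * (a * 4 + 1)) := by
      rw [hx, hc]; field_simp; ring
    have hnum : (0:ℝ) < 16 * a ^ 2 - 2 * a - 1 := by nlinarith
    have hden : (0:ℝ) < 8 * a * (a * 4 + 1) := by nlinarith
    have := div_pos hnum hden
    linarith [key, this]
  · have e : tent^[n + 2] x = 2 * a * c := by
      have : n + 2 = (n + 1) + 1 := by omega
      rw [this, hiter (n + 1) (by omega), pow_succ, h2na]; ring
    rw [e]
    have key : 2 * a * c - x = (a * 4 + 1) / (8 * a * (a * 4 + 1)) := by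
      rw [hx, hc]; field_simp; ring
    have hden : (0:ℝ) < 8 * a * (a * 4 + 1) := by nlinarith
    have := div_pos hd1 hden
    linarith [key, this]
end

section
/- For the tent map Λ and m ≥ 3, the set { x ∈ [0,1] : x < Λ(x) < Λ^2(x) < ⋯ < Λ^{m−2}(x) } equals the open interval (0, 1/(3·2^{m−4})). -/
lemma tent_of_lt {x : ℝ} (h : x < 1/2) : tent x = 2 * x := if_pos h

lemma tent_of_ge {x : ℝ} (h : 1/2 ≤ x) : tent x = 2 - 2 * x := if_neg (not_lt.2 h)

lemma tent_step {x : ℝ} (h1 : 2 * x ≤ 1) : tent x = 2 * x := by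
  rcases lt_or_eq_of_le h1 with h | h
  · exact tent_of_lt (by linarith)
  · rw [tent_of_ge (by linarith)]; linarith

lemma iter_eq (x : ℝ) (h0 : 0 ≤ x) : ∀ i, 2 ^ i * x ≤ 1 → tent^[i] x = 2 ^ i * x := by
  intro i
  induction i with
  | zero => simp
  | succ n ih =>
    intro h
    rw [pow_succ] at h
    have hn : 2 ^ n * x ≤ 1 := by
      have : (0:ℝ) ≤ 2 ^ n * x := by positivity
      linarith
    rw [Function.iterate_succ_apply', ih hn, tent_step (by linarith), pow_succ]
    ring

/-- For `m ≥ 3`, the set `{x ∈ [0,1] : x < Λ(x) < Λ²(x) < ⋯ < Λ^{m-2}(x)}` equals the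
open interval `(0, 1/(3·2^{m-4}))`, where `1/(3·2^{m-4})` means `4/(3·2^{m-2})`. -/
theorem tent_increasing_set (m : ℕ) (hm : 3 ≤ m) :
    {x : ℝ | x ∈ Set.Icc (0 : ℝ) 1 ∧
      ∀ i : ℕ, i + 1 ≤ m - 2 → tent^[i] x < tent^[i + 1] x} =
    Set.Ioo (0 : ℝ) (4 / (3 * 2 ^ (m - 2))) := by
  obtain ⟨j, hj⟩ : ∃ j, m - 2 = j + 1 := ⟨m - 3, by omega⟩
  rw [hj]
  have hpj : (1:ℝ) ≤ 2 ^ j := one_le_pow₀ (by norm_num)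
  have hden : (0:ℝ) < 3 * 2 ^ (j+1) := by positivity
  ext x
  simp only [Set.mem_setOf_eq, Set.mem_Ioo, Set.mem_Icc]
  constructor
  · rintro ⟨⟨hx0, hx1⟩, hinc⟩
    have h0 : x < tent x := hinc 0 (by omega)
    have hxpos : 0 < x := by
      rcases lt_or_eq_of_le hx0 with h | h
      · exact h
      · exfalso
        rw [← h, tent_of_lt (by norm_num)] at h0
        linarith
    refine ⟨hxpos, ?_⟩
    -- key claim: iterates up to j are linear
    have key : ∀ i, i ≤ j → tent^[i] x = 2 ^ i * x := by
      intro i hi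
      induction i with
      | zero => simp
      | succ n ih =>
        have hn : tent^[n] x = 2 ^ n * x := ih (by omega)
        set y : ℝ := 2 ^ n * x with hy
        have hypos : 0 < y := by positivity
        have h1 : y < tent y := by
          have := hinc n (by omega)
          simp only [Function.iterate_succ_apply', hn] at this
          exact this
        have h2 : tent y < tent (tent y) := by
          have := hinc (n+1) (by omega)
          simp only [Function.iterate_succ_apply', hn] at this
          exact this
        have hhalf : y ≤ 1/2 := by
          by_contra hyy
          push_neg at hyy
          rw [tent_of_ge (by linarith)] at h1 h2
          have h23 : y < 2/3 := by linarith
          rw [tent_of_ge (by linarith)] at h2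
          linarith
        rw [Function.iterate_succ_apply', hn, tent_step (by linarith), pow_succ]
        ring
    have hlastEq : tent^[j] x = 2 ^ j * x := key j le_rfl
    have hlast : 2 ^ j * x < tent (2 ^ j * x) := by
      have := hinc j (by omega)
      rwa [Function.iterate_succ_apply', hlastEq] at this
    rw [lt_div_iff₀ hden, pow_succ]
    rcases lt_or_ge (2 ^ j * x) (1/2) with hc | hc
    · nlinarith
    · rw [tent_of_ge hc] at hlast
      nlinarith
  · rintro ⟨hxpos, hxlt⟩
    rw [lt_div_iff₀ hden] at hxlt
    have hjx : 2 ^ j * x < 2/3 := by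
      rw [pow_succ] at hxlt; nlinarith
    have hx1 : x ≤ 1 := by nlinarith
    have hmono : ∀ i, i ≤ j → 2 ^ i * x ≤ 2 ^ j * x := by
      intro i hi
      have := pow_le_pow_right₀ (by norm_num : (1:ℝ) ≤ 2) hi
      nlinarith
    have hiter : ∀ i, i ≤ j → tent^[i] x = 2 ^ i * x := by
      intro i hi
      exact iter_eq x hxpos.le i (by have := hmono i hi; linarith)
    refine ⟨⟨hxpos.le, hx1⟩, ?_⟩
    intro i hi
    rcases lt_or_eq_of_le (by omega : i ≤ j) with hij | hij
    · rw [hiter i (by omega), hiter (i+1) (by omega), pow_succ]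
      have : (0:ℝ) < 2 ^ i * x := by positivity
      nlinarith
    · subst hij
      rw [hiter i le_rfl, Function.iterate_succ_apply', hiter i le_rfl]
      rcases lt_or_ge (2 ^ i * x) (1/2) with hc | hc
      · rw [tent_of_lt hc]
        have : (0:ℝ) < 2 ^ i * x := by positivity
        linarith
      · rw [tent_of_ge hc]
        rw [pow_succ] at hxlt
        nlinarith
end

section
/- For the tent map Λ and n ≥ 4: if x ∈ [0,1] satisfies Λ(x) < Λ^2(x) < ⋯ < Λ^{n−3}(x) < x < Λ^{n−2}(x), then Λ^{n−1}(x) < Λ(x). Consequently the only pattern of length n extending these relations that can occur is (n−1)·2·3·⋯·(n−2)·n·1, and in particular the patterns (n−2)·1·2·⋯·(n−3)·(n−1)·n and (n−2)·1·2·⋯·(n−3)·n·(n−1) are forbidden for Λ. -/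
/-- For `n ≥ 4`: if `x ∈ [0,1]` satisfies
`Λ(x) < Λ²(x) < ⋯ < Λ^{n-3}(x) < x < Λ^{n-2}(x)`, then `Λ^{n-1}(x) < Λ(x)`.
Consequently the patterns `(n-2)·1·2·⋯·(n-3)·(n-1)·n` and
`(n-2)·1·2·⋯·(n-3)·n·(n-1)` are forbidden for `Λ`
(in both of those patterns `x < Λ^{n-1}(x)`). -/
theorem tent_last_iterate_small (n : ℕ) (hn : 4 ≤ n) :
    (∀ x ∈ Set.Icc (0 : ℝ) 1,
      ((∀ i : ℕ, 1 ≤ i → i + 1 ≤ n - 3 → tent^[i] x < tent^[i + 1] x) ∧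
        tent^[n - 3] x < x ∧ x < tent^[n - 2] x) →
      tent^[n - 1] x < tent x) ∧
    (¬ ∃ x ∈ Set.Icc (0 : ℝ) 1,
      (∀ i : ℕ, 1 ≤ i → i + 1 ≤ n - 3 → tent^[i] x < tent^[i + 1] x) ∧
      tent^[n - 3] x < x ∧ x < tent^[n - 2] x ∧
      tent^[n - 2] x < tent^[n - 1] x) ∧
    (¬ ∃ x ∈ Set.Icc (0 : ℝ) 1,
      (∀ i : ℕ, 1 ≤ i → i + 1 ≤ n - 3 → tent^[i] x < tent^[i + 1] x) ∧
      tent^[n - 3] x < x ∧ x < tent^[n - 1] x ∧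
      tent^[n - 1] x < tent^[n - 2] x) := by
  have hle : ∀ x : ℝ,
      (∀ i : ℕ, 1 ≤ i → i + 1 ≤ n - 3 → tent^[i] x < tent^[i + 1] x) →
      tent x ≤ tent^[n - 3] x := by
    intro x hchain
    have h : ∀ j : ℕ, 1 ≤ j → j ≤ n - 3 → tent x ≤ tent^[j] x := by
      intro j
      induction j with
      | zero => intro h _; exact absurd h (by omega)
      | succ k ih =>
        intro _ hk
        rcases Nat.lt_or_ge k 1 with h1k | h1k
        · have hk0 : k = 0 := by omega
          subst hk0; simp
        · exact le_trans (ih h1k (by omega)) (le_of_lt (hchain k h1k (by omega)))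
    exact h (n - 3) (by omega) le_rfl
  have key : ∀ x ∈ Set.Icc (0 : ℝ) 1,
      ((∀ i : ℕ, 1 ≤ i → i + 1 ≤ n - 3 → tent^[i] x < tent^[i + 1] x) ∧
        tent^[n - 3] x < x ∧ x < tent^[n - 2] x) →
      tent^[n - 1] x < tent x := by
    rintro x ⟨hx0, hx1⟩ ⟨hchain, h1, h2⟩
    have hA : tent x ≤ tent^[n - 3] x := hle x hchain
    have hlt : tent x < x := lt_of_le_of_lt hA h1
    have hxhalf : ¬ x < 1 / 2 := by
      intro hx
      have : tent x = 2 * x := by rw [tent]; exact if_pos hx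
      linarith
    have htx : tent x = 2 - 2 * x := by rw [tent]; exact if_neg hxhalf
    have hy : ¬ tent^[n - 2] x < 1 / 2 := by
      push_neg at hxhalf ⊢
      linarith
    have e : n - 1 = (n - 2) + 1 := by omega
    have hfin : tent^[n - 1] x = 2 - 2 * tent^[n - 2] x := by
      rw [e, Function.iterate_succ_apply']
      rw [tent]; exact if_neg hy
    rw [hfin, htx]
    linarith
  refine ⟨key, ?_, ?_⟩
  · rintro ⟨x, hx, hchain, h1, h2, h3⟩
    have hk := key x hx ⟨hchain, h1, h2⟩
    have hA : tent x ≤ tent^[n - 3] x := hle x hchain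
    linarith
  · rintro ⟨x, hx, hchain, h1, h2, h3⟩
    have hk := key x hx ⟨hchain, h1, lt_trans h2 h3⟩
    have hA : tent x ≤ tent^[n - 3] x := hle x hchain
    linarith
end

section
/- Let f : [0,1] → [0,1] be continuous with f(0) = 0, f(x) = f(1−x) for all x, exactly one fixed point in the open interval (0,1), and f(x₀) > x₀ for some x₀. Then for every n ≥ 4, the pattern (n−2)·1·2·⋯·(n−3)·(n−1)·n is forbidden: there is no x ∈ [0,1] with f(x) < f^2(x) < ⋯ < f^{n−3}(x) < x < f^{n−2}(x) < f^{n−1}(x). -/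
/-- Let `f : [0,1] → [0,1]` be continuous with `f(0) = 0`, `f(x) = f(1-x)` for all `x`,
exactly one fixed point in `(0,1)`, and `f(x₀) > x₀` for some `x₀`. Then for every
`n ≥ 4`, there is no `x ∈ [0,1]` with
`f(x) < f²(x) < ⋯ < f^{n-3}(x) < x < f^{n-2}(x) < f^{n-1}(x)`:
the pattern `(n-2)·1·2·⋯·(n-3)·(n-1)·n` is forbidden. -/
theorem symmetric_map_forbidden (f : ℝ → ℝ)
    (hmap : ∀ x ∈ Set.Icc (0 : ℝ) 1, f x ∈ Set.Icc (0 : ℝ) 1)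
    (hcont : ContinuousOn f (Set.Icc (0 : ℝ) 1))
    (h0 : f 0 = 0)
    (hsymm : ∀ x ∈ Set.Icc (0 : ℝ) 1, f x = f (1 - x))
    (hfix : ∃! t, t ∈ Set.Ioo (0 : ℝ) 1 ∧ f t = t)
    (habove : ∃ x₀ ∈ Set.Icc (0 : ℝ) 1, x₀ < f x₀)
    (n : ℕ) (hn : 4 ≤ n) :
    ¬ ∃ x ∈ Set.Icc (0 : ℝ) 1,
      (∀ i : ℕ, 1 ≤ i → i + 1 ≤ n - 3 → f^[i] x < f^[i + 1] x) ∧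
      f^[n - 3] x < x ∧
      x < f^[n - 2] x ∧
      f^[n - 2] x < f^[n - 1] x := by
  obtain ⟨t, ⟨htmem, hft⟩, huniq⟩ := hfix
  obtain ⟨x₀, hx₀mem, hx₀⟩ := habove
  have h1 : f 1 = 0 := by rw [hsymm 1 (by norm_num)]; simpa using h0
  set g : ℝ → ℝ := fun z => f z - z with hg
  have hgcont : ContinuousOn g (Set.Icc 0 1) := hcont.sub continuousOn_id
  -- no point strictly above the diagonal in [t,1]
  have hright : ∀ y ∈ Set.Icc t 1, ¬ y < f y := by
    intro y hy hlt
    have hyt : y ≠ t := by rintro rfl; exact absurd hft hlt.ne'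
    have hyt' : t < y := lt_of_le_of_ne hy.1 (Ne.symm hyt)
    have hy1 : y < 1 := lt_of_le_of_ne hy.2 (by rintro rfl; rw [h1] at hlt; linarith)
    have hy01 : y ∈ Set.Icc (0:ℝ) 1 := ⟨le_of_lt (htmem.1.trans hyt'), hy.2⟩
    have hsub : Set.Icc y 1 ⊆ Set.Icc (0:ℝ) 1 := Set.Icc_subset_Icc hy01.1 le_rfl
    have := intermediate_value_Icc' (le_of_lt hy1) (hgcont.mono hsub)
    have h0mem : (0:ℝ) ∈ Set.Icc (g 1) (g y) := by
      constructor <;> simp [hg, h1] <;> linarith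
    obtain ⟨c, hc, hgc⟩ := this h0mem
    have hfc : f c = c := by simpa [hg, sub_eq_zero] using hgc
    have : c = t := huniq c ⟨⟨lt_of_lt_of_le (htmem.1.trans hyt') hc.1,
      lt_of_le_of_ne hc.2 (by rintro rfl; rw [h1] at hfc; linarith)⟩, hfc⟩
    linarith [hc.1, hyt']
  have hx₀t : x₀ < t := by
    by_contra h
    exact hright x₀ ⟨le_of_not_gt h, hx₀mem.2⟩ hx₀
  have hx₀pos : 0 < x₀ := by
    rcases lt_or_eq_of_le hx₀mem.1 with h | h
    · exact h
    · exfalso; rw [← h, h0] at hx₀; linarith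
  -- strictly above the diagonal on (0,t)
  have hleft : ∀ y ∈ Set.Ioo (0:ℝ) t, y < f y := by
    intro y hy
    by_contra h
    push_neg at h
    have hy01 : y ∈ Set.Icc (0:ℝ) 1 := ⟨le_of_lt hy.1, le_of_lt (hy.2.trans htmem.2)⟩
    rcases lt_or_eq_of_le h with h | h
    · -- f y < y, g y < 0, g x₀ > 0, IVT
      have hsub : Set.uIcc y x₀ ⊆ Set.Icc (0:ℝ) 1 := by
        apply Set.uIcc_subset_Icc hy01 hx₀mem
      have := intermediate_value_uIcc (hgcont.mono hsub)
      have h0mem : (0:ℝ) ∈ Set.uIcc (g y) (g x₀) := by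
        rw [Set.mem_uIcc]
        left; constructor <;> simp [hg] <;> linarith
      obtain ⟨c, hc, hgc⟩ := this h0mem
      have hfc : f c = c := by simpa [hg, sub_eq_zero] using hgc
      rw [Set.mem_uIcc] at hc
      have hc0 : 0 < c := by rcases hc with ⟨a,b⟩|⟨a,b⟩ <;> linarith [hy.1, hy.2, hx₀pos, hx₀t]
      have hct : c < t := by rcases hc with ⟨a,b⟩|⟨a,b⟩ <;> linarith [hy.1, hy.2, hx₀pos, hx₀t]
      have : c = t := huniq c ⟨⟨hc0, hct.trans htmem.2⟩, hfc⟩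
      linarith
    · have : y = t := huniq y ⟨⟨hy.1, hy.2.trans htmem.2⟩, h⟩
      linarith [hy.2]
  rintro ⟨x, hx, hchain, h3, h2, h1'⟩
  have hiter : ∀ k, f^[k] x ∈ Set.Icc (0:ℝ) 1 := by
    intro k
    induction k with
    | zero => simpa using hx
    | succ k ih => rw [Function.iterate_succ_apply']; exact hmap _ ih
  -- x < t
  have hlt_t : x < t := by
    have hn2 : f^[n-2] x < t := by
      by_contra h
      push_neg at h
      apply hright (f^[n-2] x) ⟨h, (hiter (n-2)).2⟩
      have : f^[n-1] x = f (f^[n-2] x) := by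
        have e : n - 1 = (n - 2) + 1 := by omega
        rw [e, Function.iterate_succ_apply']
      linarith [h1', this ▸ h1']
    linarith
  have hx_pos : 0 < x := lt_of_le_of_lt (hiter (n-3)).1 h3
  have hfx : x < f x := hleft x ⟨hx_pos, hlt_t⟩
  -- f x ≤ f^[n-3] x
  have hmono : ∀ k, 1 ≤ k → k ≤ n - 3 → f^[1] x ≤ f^[k] x := by
    intro k
    induction k with
    | zero => omega
    | succ k ih =>
      intro _ hk
      rcases Nat.eq_or_lt_of_le (Nat.one_le_iff_ne_zero.mpr (by omega) : 1 ≤ k + 1) with h | h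
      · rw [← h]
      · have hk1 : 1 ≤ k := by omega
        exact le_of_lt (lt_of_le_of_lt (ih hk1 (by omega)) (hchain k hk1 hk))
  have : f x ≤ f^[n-3] x := by
    have := hmono (n-3) (by omega) le_rfl
    simpa using this
  linarith
end

section
/- Let f : [0,1] → [0,1] be continuous satisfying f(0) = 0, f(x) = f(1−x) for all x, exactly one fixed point in (0,1), and f(x₀) > x₀ for some x₀. Then for every m ≥ 3 there exists x ∈ [0,1] with f(x) < f^2(x) < ⋯ < f^{m−1}(x) < x; i.e., the pattern m·1·2·⋯·(m−1) is allowed for f. -/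
/-- Let `f : [0,1] → [0,1]` be continuous with `f(0) = 0`, `f(x) = f(1-x)` for all `x`,
exactly one fixed point in `(0,1)`, and `f(x₀) > x₀` for some `x₀`. Then for every
`m ≥ 3` there exists `x ∈ [0,1]` with `f(x) < f²(x) < ⋯ < f^{m-1}(x) < x`:
the pattern `m·1·2·⋯·(m-1)` is allowed for `f`. -/
theorem symmetric_map_pattern_allowed (f : ℝ → ℝ)
    (hmap : ∀ x ∈ Set.Icc (0 : ℝ) 1, f x ∈ Set.Icc (0 : ℝ) 1)
    (hcont : ContinuousOn f (Set.Icc (0 : ℝ) 1))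
    (h0 : f 0 = 0)
    (hsymm : ∀ x ∈ Set.Icc (0 : ℝ) 1, f x = f (1 - x))
    (hfix : ∃! t, t ∈ Set.Ioo (0 : ℝ) 1 ∧ f t = t)
    (habove : ∃ x₀ ∈ Set.Icc (0 : ℝ) 1, x₀ < f x₀)
    (m : ℕ) (hm : 3 ≤ m) :
    ∃ x ∈ Set.Icc (0 : ℝ) 1,
      (∀ i : ℕ, 1 ≤ i → i + 1 ≤ m - 1 → f^[i] x < f^[i + 1] x) ∧
      f^[m - 1] x < x := by
  obtain ⟨t, ⟨⟨ht0, ht1⟩, htf⟩, huniq⟩ := hfix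
  obtain ⟨x₀, ⟨hx₀0, hx₀1⟩, hx₀⟩ := habove
  have h1 : f 1 = 0 := by
    have := hsymm 0 (by norm_num)
    simp at this
    linarith
  have huniq' : ∀ s : ℝ, 0 < s → s < 1 → f s = s → s = t := fun s hs0 hs1 hs =>
    huniq s ⟨⟨hs0, hs1⟩, hs⟩
  have hg : ContinuousOn (fun x => f x - x) (Set.Icc (0:ℝ) 1) := hcont.sub continuousOn_id
  -- f < id on (t, 1)
  have hbelow : ∀ y : ℝ, t < y → y < 1 → f y < y := by
    intro y hty hy1
    by_contra h
    push_neg at h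
    rcases eq_or_lt_of_le h with heq | hlt
    · have := huniq' y (lt_trans ht0 hty) hy1 heq.symm
      linarith
    · have hsub : Set.Icc y 1 ⊆ Set.Icc (0:ℝ) 1 := Set.Icc_subset_Icc (by linarith) le_rfl
      have hivt := intermediate_value_Icc' (le_of_lt hy1) (hg.mono hsub)
      have h0mem : (0:ℝ) ∈ Set.Icc (f 1 - 1) (f y - y) := by
        constructor <;> simp [h1] <;> linarith
      obtain ⟨s, ⟨hs1, hs2⟩, hs⟩ := hivt h0mem
      simp only at hs
      have hfs : f s = s := by linarith
      have hst : s = t := huniq' s (by linarith) (by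
        rcases lt_or_eq_of_le hs2 with h' | h'
        · exact h'
        · exfalso; rw [h'] at hfs; rw [hfs] at h1; linarith) hfs
      have : t < s := by
        rcases eq_or_lt_of_le hs1 with h' | h'
        · exfalso; rw [← h'] at hfs; linarith
        · linarith
      linarith [hst ▸ this]
  -- x₀ ∈ (0, t)
  have hx₀t : 0 < x₀ ∧ x₀ < t := by
    constructor
    · rcases eq_or_lt_of_le hx₀0 with h' | h'
      · exfalso; rw [← h'] at hx₀; linarith [h0 ▸ hx₀]
      · exact h'
    · by_contra h
      push_neg at h
      rcases eq_or_lt_of_le h with h' | h'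
      · rw [h'] at htf; linarith
      · rcases eq_or_lt_of_le hx₀1 with h'' | h''
        · rw [h''] at hx₀; linarith
        · linarith [hbelow x₀ h' h'']
  -- f > id on (0, t)
  have habove' : ∀ y : ℝ, 0 < y → y < t → y < f y := by
    intro y hy0 hyt
    by_contra h
    push_neg at h
    rcases eq_or_lt_of_le h with heq | hlt
    · have := huniq' y hy0 (by linarith) heq
      linarith
    · -- IVT between y and x₀ : g y < 0 < g x₀
      have hsub : Set.uIcc y x₀ ⊆ Set.Icc (0:ℝ) 1 :=
        Set.uIcc_subset_Icc ⟨by linarith, by linarith⟩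
          ⟨by linarith [hx₀t.1], by linarith [hx₀t.2]⟩
      have hivt := intermediate_value_uIcc (hg.mono hsub)
      have h0mem : (0:ℝ) ∈ Set.uIcc (f y - y) (f x₀ - x₀) := by
        rw [Set.mem_uIcc]
        left; constructor <;> linarith
      obtain ⟨s, hsmem, hs⟩ := hivt h0mem
      simp only at hs
      have hfs : f s = s := by linarith
      have hsm := Set.mem_uIcc.mp hsmem
      have hs0 : 0 < s := by
        rcases hsm with ⟨a, b⟩ | ⟨a, b⟩ <;> linarith [hx₀t.1]
      have hst : s < t := by
        rcases hsm with ⟨a, b⟩ | ⟨a, b⟩ <;> linarith [hx₀t.2]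
      have := huniq' s hs0 (by linarith) hfs
      linarith
  -- iterates of small points stay small
  have key : ∀ n : ℕ, ∀ ε : ℝ, 0 < ε → ∃ δ > (0:ℝ), ∀ x ∈ Set.Icc (0:ℝ) 1, x < δ →
      ∀ j ≤ n, f^[j] x < ε := by
    intro n
    induction n with
    | zero =>
      intro ε hε
      refine ⟨ε, hε, fun x hx hxδ j hj => ?_⟩
      interval_cases j
      simpa using hxδ
    | succ n ih =>
      intro ε hε
      obtain ⟨δ₁, hδ₁pos, hδ₁⟩ := ih ε hε
      have hc0 : ContinuousWithinAt f (Set.Icc (0:ℝ) 1) 0 := hcont 0 (by norm_num)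
      rw [Metric.continuousWithinAt_iff] at hc0
      obtain ⟨δ₂, hδ₂pos, H⟩ := hc0 δ₁ hδ₁pos
      refine ⟨min δ₂ ε, lt_min hδ₂pos hε, fun x hx hxδ j hj => ?_⟩
      cases j with
      | zero => simpa using lt_of_lt_of_le hxδ (min_le_right _ _)
      | succ j =>
        rw [Function.iterate_succ_apply]
        have hdist : dist x 0 < δ₂ := by
          rw [Real.dist_eq, sub_zero, abs_of_nonneg hx.1]
          exact lt_of_lt_of_le hxδ (min_le_left _ _)
        have hfxδ : f x < δ₁ := by
          have := H hx hdist
          rw [Real.dist_eq, h0, sub_zero, abs_of_nonneg (hmap x hx).1] at this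
          exact this
        exact hδ₁ (f x) (hmap x hx) hfxδ j (by omega)
  set ε : ℝ := min t (1/2) with hεdef
  have hεpos : 0 < ε := lt_min ht0 (by norm_num)
  have hεt : ε ≤ t := min_le_left _ _
  have hεhalf : ε ≤ 1/2 := min_le_right _ _
  obtain ⟨δ, hδpos, hδ⟩ := key (m - 2) ε hεpos
  set y : ℝ := min δ ε / 2 with hydef
  have hy0 : 0 < y := by positivity
  have hyδ : y < δ := by
    have : min δ ε ≤ δ := min_le_left _ _
    have : y ≤ δ / 2 := by rw [hydef]; linarith
    linarith
  have hyε : y < ε := by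
    have : min δ ε ≤ ε := min_le_right _ _
    have : y ≤ ε / 2 := by rw [hydef]; linarith
    linarith
  have hyhalf : y ≤ 1/2 := by linarith
  have hymem : y ∈ Set.Icc (0:ℝ) 1 := ⟨le_of_lt hy0, by linarith⟩
  have hiter : ∀ j ≤ m - 2, f^[j] y < ε := hδ y hymem hyδ
  -- positivity of iterates
  have hpos : ∀ j ≤ m - 2, 0 < f^[j] y := by
    intro j
    induction j with
    | zero => intro _; simpa using hy0
    | succ j ih =>
      intro hj
      have hj' : j ≤ m - 2 := by omega
      have h1' := ih hj'
      have h2' := hiter j hj'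
      rw [Function.iterate_succ_apply']
      have := habove' (f^[j] y) h1' (by linarith)
      linarith
  -- strict chain
  have hchain : ∀ j : ℕ, j + 1 ≤ m - 2 → f^[j] y < f^[j+1] y := by
    intro j hj
    have hj' : j ≤ m - 2 := by omega
    rw [Function.iterate_succ_apply']
    exact habove' (f^[j] y) (hpos j hj') (by linarith [hiter j hj'])
  -- preimage z ∈ (0, y) of y
  have hfy : y < f y := habove' y hy0 (by linarith)
  have hsub : Set.Icc (0:ℝ) y ⊆ Set.Icc (0:ℝ) 1 := Set.Icc_subset_Icc le_rfl (by linarith)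
  obtain ⟨z, hzmem, hfz⟩ := intermediate_value_Ioo (le_of_lt hy0) (hcont.mono hsub)
    (show y ∈ Set.Ioo (f 0) (f y) by rw [h0]; exact ⟨hy0, hfy⟩)
  obtain ⟨hz0, hzy⟩ := hzmem
  have hzmem1 : z ∈ Set.Icc (0:ℝ) 1 := ⟨le_of_lt hz0, by linarith⟩
  -- the point x = 1 - z
  refine ⟨1 - z, ⟨by linarith, by linarith⟩, ?_, ?_⟩
  · intro i hi1 him
    obtain ⟨j, rfl⟩ : ∃ j, i = j + 1 := ⟨i - 1, by omega⟩
    have hfx : f (1 - z) = y := by rw [← hsymm z hzmem1, hfz]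
    have hit : ∀ i : ℕ, f^[i+1] (1 - z) = f^[i] y := fun i => by
      rw [Function.iterate_succ_apply, hfx]
    rw [hit j, show j + 1 + 1 = (j+1) + 1 from rfl, hit (j+1)]
    exact hchain j (by omega)
  · have hm1 : m - 1 = (m - 2) + 1 := by omega
    have hfx : f (1 - z) = y := by rw [← hsymm z hzmem1, hfz]
    rw [hm1, Function.iterate_succ_apply, hfx]
    have := hiter (m - 2) le_rfl
    linarith
end

section
/- Let g : [0,1] → [0,1] be g(x) = 1 − x². Let φ = (√5 − 1)/2 be the fixed point of g in (0,1). Then for every x ∈ (0, φ) and every k ≥ 0: g^{2k+2}(x) < g^{2k}(x) and g^{2k}(x) < g^{2k+1}(x) < g^{2k+3}(x); in particular the even iterates of x are strictly decreasing, the odd iterates strictly increasing, and every even iterate is less than every odd iterate. -/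
/-- The map `g(x) = 1 - x²`. -/
def gmap : ℝ → ℝ := fun x => 1 - x ^ 2

lemma gmap_key {y : ℝ} (hy : y ∈ Set.Ioo (0 : ℝ) ((Real.sqrt 5 - 1) / 2)) :
    gmap (gmap y) ∈ Set.Ioo (0 : ℝ) ((Real.sqrt 5 - 1) / 2) ∧
    gmap (gmap y) < y ∧ y < gmap y ∧ gmap y < gmap (gmap (gmap y)) := by
  obtain ⟨h0, hφ⟩ := hy
  have h5 : Real.sqrt 5 ^ 2 = 5 := Real.sq_sqrt (by norm_num)
  have hs : (2 : ℝ) < Real.sqrt 5 := by nlinarith [Real.sqrt_nonneg 5]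
  have hy1 : y < 1 := by nlinarith
  have hsq : y ^ 2 + y < 1 := by nlinarith
  have hprod : 0 < y * (1 - y) * (1 - y - y ^ 2) :=
    mul_pos (mul_pos h0 (by linarith)) (by nlinarith)
  simp only [gmap]
  have hlt : 1 - (1 - y ^ 2) ^ 2 < y := by nlinarith
  have hpos : 0 < 1 - (1 - y ^ 2) ^ 2 := by nlinarith
  refine ⟨⟨hpos, by linarith⟩, hlt, by nlinarith, ?_⟩
  nlinarith [mul_pos hpos hpos]

/-- Let `g(x) = 1 - x²` and `φ = (√5 - 1)/2` be the fixed point of `g` in `(0,1)`.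
For every `x ∈ (0, φ)` and `k ≥ 0`: `g^{2k+2}(x) < g^{2k}(x)` and
`g^{2k}(x) < g^{2k+1}(x) < g^{2k+3}(x)`: even iterates strictly decrease, odd iterates
strictly increase, and every even iterate is less than every odd one. -/
theorem gmap_iterates (x : ℝ) (hx : x ∈ Set.Ioo (0 : ℝ) ((Real.sqrt 5 - 1) / 2))
    (k : ℕ) :
    gmap^[2 * k + 2] x < gmap^[2 * k] x ∧
    gmap^[2 * k] x < gmap^[2 * k + 1] x ∧
    gmap^[2 * k + 1] x < gmap^[2 * k + 3] x := by
  have mem : ∀ n : ℕ, gmap^[2 * n] x ∈ Set.Ioo (0 : ℝ) ((Real.sqrt 5 - 1) / 2) := by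
    intro n
    induction n with
    | zero => simpa using hx
    | succ m ih =>
      have h : 2 * (m + 1) = 2 + 2 * m := by ring
      rw [h, Function.iterate_add_apply]
      exact (gmap_key ih).1
  set y := gmap^[2 * k] x with hy
  have e1 : gmap^[2 * k + 2] x = gmap (gmap y) := by
    rw [show 2 * k + 2 = 2 + 2 * k by ring, Function.iterate_add_apply]; rfl
  have e2 : gmap^[2 * k + 1] x = gmap y := by
    rw [show 2 * k + 1 = 1 + 2 * k by ring, Function.iterate_add_apply]; rfl
  have e3 : gmap^[2 * k + 3] x = gmap (gmap (gmap y)) := by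
    rw [show 2 * k + 3 = 3 + 2 * k by ring, Function.iterate_add_apply]; rfl
  obtain ⟨-, h1, h2, h3⟩ := gmap_key (mem k)
  rw [e1, e2, e3]
  exact ⟨h1, h2, h3⟩
end

section
/- Let f : [0,1] → [0,1] and let D = { x ∈ [0,1] : f(x) < x }. Suppose D is a union of k intervals (connected components) D₁, …, D_k, and suppose there is y ∈ [0,1] whose first n = 2k+2 iterates y, f(y), …, f^{n−1}(y) realize the pattern 3·5·⋯·(2k+1)·(2k+2)·(2k)·(2k−2)·⋯·4·2·1 (i.e., for some indexing, k+1 consecutive positions j, j+1, …, j+k each satisfy f^{j−1}(y) > f^j(y) with an intermediate point f^{ℓ−1}(y) strictly between consecutive descent values and satisfying f^{ℓ−1}(y) < f^ℓ(y)). Then a contradiction follows: two of the k+1 descent points lie in the same component D_α, and the intermediate point lies in D_α yet not in D. Hence this pattern of length 2k+2 is forbidden for f. -/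
/-- The rank (1-based) of the `j`-th orbit point (0-indexed) in the pattern
`3·5·⋯·(2k+1)·(2k+2)·(2k)·(2k-2)·⋯·4·2·1` of length `2k+2`. -/
def descentPattern (k j : ℕ) : ℕ :=
  if j < k then 2 * j + 3
  else if j = k then 2 * k + 2
  else if j < 2 * k + 1 then 4 * k + 2 - 2 * j
  else 1

/-- Let `f : [0,1] → [0,1]` and `D = {x ∈ [0,1] : f(x) < x}`. If `D` is a union of `k`
intervals, then the pattern `3·5·⋯·(2k+1)·(2k+2)·(2k)·(2k-2)·⋯·4·2·1` of length
`2k+2` is forbidden for `f`: no `y ∈ [0,1]` has its first `2k+2` iterates realizing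
this relative order. -/
theorem descent_pattern_forbidden (k : ℕ) (hk : 1 ≤ k) (f : ℝ → ℝ)
    (hmap : ∀ x ∈ Set.Icc (0 : ℝ) 1, f x ∈ Set.Icc (0 : ℝ) 1)
    (D : Fin k → Set ℝ)
    (hconn : ∀ α : Fin k, (D α).OrdConnected)
    (hD : {x : ℝ | x ∈ Set.Icc (0 : ℝ) 1 ∧ f x < x} = ⋃ α : Fin k, D α) :
    ¬ ∃ y ∈ Set.Icc (0 : ℝ) 1,
      ∀ i j : ℕ, i < 2 * k + 2 → j < 2 * k + 2 →
        (descentPattern k i < descentPattern k j ↔ f^[i] y < f^[j] y) := by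
  rintro ⟨y, hy, hpat⟩
  -- all orbit points stay in [0,1]
  have hxI : ∀ j : ℕ, f^[j] y ∈ Set.Icc (0 : ℝ) 1 := by
    intro j
    induction j with
    | zero => simpa using hy
    | succ n ih =>
      rw [Function.iterate_succ_apply']
      exact hmap _ ih
  -- descent points
  have hdesc : ∀ j : ℕ, k ≤ j → j ≤ 2 * k → f^[j] y ∈ ⋃ α : Fin k, D α := by
    intro j h1 h2
    rw [← hD]
    refine ⟨hxI j, ?_⟩
    have h := (hpat (j + 1) j (by omega) (by omega)).mp ?_
    · rwa [Function.iterate_succ_apply'] at h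
    · unfold descentPattern
      split_ifs <;> omega
  have hmem : ∀ i : Fin (k + 1), ∃ α : Fin k, f^[k + i] y ∈ D α := by
    intro i
    have := i.isLt
    exact Set.mem_iUnion.mp (hdesc (k + i) (by omega) (by omega))
  choose g hg using hmem
  have key : ∀ i₁ i₂ : Fin (k + 1), i₁ < i₂ → g i₁ = g i₂ → False := by
    intro i₁ i₂ hlt heq
    have h1 : (i₁ : ℕ) < (i₂ : ℕ) := hlt
    have h2 : (i₂ : ℕ) ≤ k := by have := i₂.isLt; omega
    set ℓ : ℕ := k - i₂ with hℓ
    -- x_{j₂} < x_ℓ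
    have hA : f^[k + i₂] y < f^[ℓ] y := by
      refine (hpat (k + i₂) ℓ (by omega) (by omega)).mp ?_
      unfold descentPattern
      split_ifs <;> omega
    -- x_ℓ < x_{j₁}
    have hB : f^[ℓ] y < f^[k + i₁] y := by
      refine (hpat ℓ (k + i₁) (by omega) (by omega)).mp ?_
      unfold descentPattern
      split_ifs <;> omega
    -- x_ℓ lies in D (g i₁)
    have hg2 : f^[k + i₂] y ∈ D (g i₁) := by rw [heq]; exact hg i₂
    have hℓD : f^[ℓ] y ∈ D (g i₁) :=
      (hconn (g i₁)).out hg2 (hg i₁) ⟨le_of_lt hA, le_of_lt hB⟩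
    have hℓD' : f^[ℓ] y ∈ {x : ℝ | x ∈ Set.Icc (0 : ℝ) 1 ∧ f x < x} := by
      rw [hD]; exact Set.mem_iUnion_of_mem _ hℓD
    have hfl : f (f^[ℓ] y) < f^[ℓ] y := hℓD'.2
    -- but x_ℓ < x_{ℓ+1} = f(x_ℓ)
    have hC : f^[ℓ] y < f^[ℓ + 1] y := by
      refine (hpat ℓ (ℓ + 1) (by omega) (by omega)).mp ?_
      unfold descentPattern
      split_ifs <;> omega
    rw [Function.iterate_succ_apply'] at hC
    linarith
  obtain ⟨i₁, i₂, hne, heq⟩ :=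
    Fintype.exists_ne_map_eq_of_card_lt g (by simp)
  rcases hne.lt_or_gt with h | h
  · exact key i₁ i₂ h heq
  · exact key i₂ i₁ h heq.symm
end
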